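/- arXiv:1907.07966 — 3 statements merged into one kernel-verified Lean document; each statement's English description precedes it below -/
import Mathlib

section
/- For every Bernstein function φ (not identically zero) and every complex z, the limit as u → ∞ (u real) of φ(u + z)/φ(u) equals 1, uniformly for z in compact subsets of ℂ. -/
open MeasureTheory Filter

private lemma brt_ae_pos (μ : Measure ℝ) (hμ0 : μ (Set.Iic 0) = 0) : ∀ᵐ y ∂μ, 0 < y := by
  rw [ae_iff]
  have : {y : ℝ | ¬ 0 < y} = Set.Iic 0 := by ext y; simp [not_lt]
  rw [this]; exact hμ0

private lemma brt_base_int (μ : Measure ℝ) (hμ0 : μ (Set.Iic 0) = 0)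
    (hμint : ∫⁻ y, ENNReal.ofReal (min y 1) ∂μ ≠ ⊤) :
    Integrable (fun y : ℝ => min |y| 1) μ := by
  refine ⟨(continuous_abs.min continuous_const).aestronglyMeasurable, ?_⟩
  rw [hasFiniteIntegral_iff_ofReal (Eventually.of_forall fun y => le_min (abs_nonneg y) one_pos.le)]
  have : ∫⁻ y, ENNReal.ofReal (min |y| 1) ∂μ = ∫⁻ y, ENNReal.ofReal (min y 1) ∂μ := by
    refine lintegral_congr_ae ?_
    filter_upwards [brt_ae_pos μ hμ0] with y hy
    rw [abs_of_pos hy]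
  rw [this]
  exact lt_top_iff_ne_top.2 hμint

private lemma brt_key_bound (w : ℂ) (y : ℝ) (hy : 0 ≤ y) :
    ‖1 - Complex.exp (-(w * y))‖ ≤
      2 * Real.exp (max (-(w.re * y)) 0) * min (‖w‖ * y) 1 := by
  have hnorm : ‖w * (y : ℂ)‖ = ‖w‖ * y := by
    rw [norm_mul, Complex.norm_real, Real.norm_eq_abs, abs_of_nonneg hy]
  have hexp1 : (1 : ℝ) ≤ Real.exp (max (-(w.re * y)) 0) :=
    Real.one_le_exp (le_max_right _ _)
  rcases le_or_gt (‖w‖ * y) 1 with h | h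
  · have h1 : ‖-(w * y)‖ ≤ 1 := by
      rw [norm_neg, hnorm]; exact h
    have h2 := Complex.norm_exp_sub_one_le h1
    rw [norm_neg, hnorm] at h2
    rw [norm_sub_rev]
    calc ‖Complex.exp (-(w * y)) - 1‖ ≤ 2 * (‖w‖ * y) := h2
      _ = 2 * 1 * min (‖w‖ * y) 1 := by rw [min_eq_left h]; ring
      _ ≤ 2 * Real.exp (max (-(w.re * y)) 0) * min (‖w‖ * y) 1 := by
          have hm : 0 ≤ min (‖w‖ * y) 1 :=
            le_min (mul_nonneg (norm_nonneg _) hy) one_pos.le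
          nlinarith
  · have h1 : ‖1 - Complex.exp (-(w * y))‖ ≤ 1 + Real.exp (-(w.re * y)) := by
      calc ‖1 - Complex.exp (-(w * y))‖ ≤ ‖(1 : ℂ)‖ + ‖Complex.exp (-(w * y))‖ :=
            norm_sub_le _ _
        _ = 1 + Real.exp (-(w.re * y)) := by
            rw [norm_one, Complex.norm_exp]
            norm_num
    calc ‖1 - Complex.exp (-(w * y))‖ ≤ 1 + Real.exp (-(w.re * y)) := h1
      _ ≤ Real.exp (max (-(w.re * y)) 0) + Real.exp (max (-(w.re * y)) 0) := by
          have := Real.exp_le_exp.2 (le_max_left (-(w.re * y)) 0)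
          linarith
      _ = 2 * Real.exp (max (-(w.re * y)) 0) * min (‖w‖ * y) 1 := by
          rw [min_eq_right h.le]; ring

private lemma brt_min_le (a y : ℝ) (hy : 0 < y) :
    min (a * y) 1 ≤ max a 1 * min |y| 1 := by
  rw [abs_of_pos hy]
  rcases le_total y 1 with h | h
  · rw [min_eq_left h]
    calc min (a * y) 1 ≤ a * y := min_le_left _ _
      _ ≤ max a 1 * y := by nlinarith [le_max_left a 1]
  · rw [min_eq_right h]
    calc min (a * y) 1 ≤ 1 := min_le_right _ _
      _ ≤ max a 1 * 1 := by nlinarith [le_max_right a 1]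

private lemma brt_int_complex (μ : Measure ℝ) (hμ0 : μ (Set.Iic 0) = 0)
    (hμint : ∫⁻ y, ENNReal.ofReal (min y 1) ∂μ ≠ ⊤) (w : ℂ) (hw : 0 < w.re) :
    Integrable (fun y : ℝ => 1 - Complex.exp (-(w * y))) μ := by
  have hcont : Continuous fun y : ℝ => 1 - Complex.exp (-(w * y)) :=
    continuous_const.sub (Complex.continuous_exp.comp
      ((continuous_const.mul Complex.continuous_ofReal).neg))
  refine Integrable.mono' (((brt_base_int μ hμ0 hμint).const_mul (2 * max ‖w‖ 1)))
    hcont.aestronglyMeasurable ?_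
  filter_upwards [brt_ae_pos μ hμ0] with y hy
  calc ‖1 - Complex.exp (-(w * y))‖
      ≤ 2 * Real.exp (max (-(w.re * y)) 0) * min (‖w‖ * y) 1 := brt_key_bound w y hy.le
    _ = 2 * min (‖w‖ * y) 1 := by
        rw [max_eq_right (by nlinarith : -(w.re * y) ≤ 0), Real.exp_zero]; ring
    _ ≤ 2 * (max ‖w‖ 1 * min |y| 1) := by
        have := brt_min_le ‖w‖ y hy
        linarith
    _ = 2 * max ‖w‖ 1 * min |y| 1 := by ring

set_option maxHeartbeats 1000000 in
/-- For a nonzero Bernstein function `Φ`, extended holomorphically to the right half-plane via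
`Φ(w) = φ0 + d·w + ∫ (1 - e^{-wy}) Π(dy)`, one has `Φ(u+z)/Φ(u) → 1` as the real variable
`u → ∞`, uniformly for `z` in compact subsets of `ℂ`. -/
theorem bernstein_ratio_tendsto_one_complex (Φ : ℂ → ℂ) (φ0 d : ℝ) (hφ0 : 0 ≤ φ0) (hd : 0 ≤ d)
    (μ : Measure ℝ) (hμ0 : μ (Set.Iic 0) = 0)
    (hμint : ∫⁻ y, ENNReal.ofReal (min y 1) ∂μ ≠ ⊤)
    (hrep : ∀ w : ℂ, 0 < w.re →
      Φ w = (φ0 : ℂ) + (d : ℂ) * w + ∫ y, (1 - Complex.exp (-(w * (y : ℂ)))) ∂μ)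
    (hne : ∃ u : ℝ, 0 < u ∧ Φ u ≠ 0) :
    ∀ K : Set ℂ, IsCompact K →
      TendstoUniformlyOn (fun (u : ℝ) (z : ℂ) => Φ ((u : ℂ) + z) / Φ (u : ℂ))
        (fun _ => 1) atTop K := by
  have hae := brt_ae_pos μ hμ0
  have hbase := brt_base_int μ hμ0 hμint
  -- real-valued representation on the positive reals
  set φR : ℝ → ℝ := fun u => φ0 + d * u + ∫ y, (1 - Real.exp (-(u * y))) ∂μ with hφR
  have hcast : ∀ u : ℝ, (fun y : ℝ => 1 - Complex.exp (-((u : ℂ) * (y : ℂ))))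
      = fun y : ℝ => ((1 - Real.exp (-(u * y)) : ℝ) : ℂ) := by
    intro u; funext y
    push_cast [Complex.ofReal_exp]
    norm_num
  have hΦeq : ∀ u : ℝ, 0 < u → Φ u = ((φR u : ℝ) : ℂ) := by
    intro u hu
    have hIeq : (∫ y, (1 - Complex.exp (-((u : ℂ) * (y : ℂ)))) ∂μ)
        = ((∫ y, (1 - Real.exp (-(u * y))) ∂μ : ℝ) : ℂ) := by
      rw [hcast u]; exact integral_ofReal
    rw [hrep u (by simpa using hu), hIeq, hφR]
    push_cast
    ring
  have hintR : ∀ u : ℝ, 0 < u → Integrable (fun y : ℝ => 1 - Real.exp (-(u * y))) μ := by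
    intro u hu
    have h1 := (brt_int_complex μ hμ0 hμint u (by simpa using hu)).re
    refine h1.congr (Eventually.of_forall fun y => ?_)
    have h2 : (1 - Complex.exp (-((u : ℂ) * (y : ℂ)))) = ((1 - Real.exp (-(u * y)) : ℝ) : ℂ) :=
      congrFun (hcast u) y
    simp only [h2]
    have h3 : -((u : ℂ) * (y : ℂ)) = ((-(u * y) : ℝ) : ℂ) := by push_cast; ring
    simp [h3, ← Complex.ofReal_exp]
  have hnonnegI : ∀ u : ℝ, 0 < u → 0 ≤ ∫ y, (1 - Real.exp (-(u * y))) ∂μ := by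
    intro u hu
    refine integral_nonneg_of_ae ?_
    filter_upwards [hae] with y hy
    have : Real.exp (-(u * y)) ≤ 1 := Real.exp_le_one_iff.2 (by nlinarith)
    simp only [Pi.zero_apply]
    linarith
  have hmono : ∀ u v : ℝ, 0 < u → u ≤ v → φR u ≤ φR v := by
    intro u v hu huv
    have hv : 0 < v := lt_of_lt_of_le hu huv
    have hint : (∫ y, (1 - Real.exp (-(u * y))) ∂μ) ≤ ∫ y, (1 - Real.exp (-(v * y))) ∂μ := by
      refine integral_mono_ae (hintR u hu) (hintR v hv) ?_
      filter_upwards [hae] with y hy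
      have : Real.exp (-(v * y)) ≤ Real.exp (-(u * y)) := Real.exp_le_exp.2 (by nlinarith)
      linarith
    have : d * u ≤ d * v := by nlinarith
    simp only [hφR]
    linarith
  have hge_du : ∀ u : ℝ, 0 < u → d * u ≤ φR u := by
    intro u hu
    have := hnonnegI u hu
    simp only [hφR]
    linarith
  obtain ⟨u0, hu0pos, hu0ne⟩ := hne
  have hc : 0 < φR u0 := by
    have hne' : φR u0 ≠ 0 := by
      intro h
      exact hu0ne (by rw [hΦeq u0 hu0pos, h]; simp)
    have : 0 ≤ φR u0 := by
      have := hnonnegI u0 hu0pos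
      simp only [hφR]
      nlinarith
    exact lt_of_le_of_ne this (Ne.symm hne')
  set c := φR u0 with hcdef
  -- main part
  intro K hK
  obtain ⟨R0, hR0⟩ := hK.isBounded.exists_norm_le
  set R : ℝ := max R0 1 with hRdef
  have hR1 : (1 : ℝ) ≤ R := le_max_right _ _
  have hRpos : (0 : ℝ) < R := lt_of_lt_of_le one_pos hR1
  have hzR : ∀ z ∈ K, ‖z‖ ≤ R := fun z hz => le_trans (hR0 z hz) (le_max_left _ _)
  set h : ℝ → ℝ → ℝ := fun u y => 2 * Real.exp (-((u - R) * y)) * min (R * y) 1 with hhdef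
  have hhcont : ∀ u, Continuous (h u) := fun u =>
    (continuous_const.mul ((continuous_const.mul continuous_id).neg.rexp)).mul
      ((continuous_const.mul continuous_id).min continuous_const)
  have hhnonneg : ∀ u : ℝ, ∀ y : ℝ, 0 < y → 0 ≤ h u y := by
    intro u y hy
    have : 0 ≤ min (R * y) 1 := le_min (by positivity) one_pos.le
    have := Real.exp_pos (-((u - R) * y))
    simp only [hhdef]
    nlinarith
  have hhbound : ∀ u : ℝ, R ≤ u → ∀ y : ℝ, 0 < y → h u y ≤ 2 * R * min |y| 1 := by
    intro u hu y hy
    have h1 : Real.exp (-((u - R) * y)) ≤ 1 := Real.exp_le_one_iff.2 (by nlinarith)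
    have h2 : min (R * y) 1 ≤ max R 1 * min |y| 1 := brt_min_le R y hy
    have h3 : max R 1 = R := max_eq_left hR1
    have h4 : 0 ≤ min (R * y) 1 := le_min (by positivity) one_pos.le
    have h5 : 0 ≤ min |y| 1 := le_min (abs_nonneg _) one_pos.le
    rw [h3] at h2
    simp only [hhdef]
    nlinarith [Real.exp_pos (-((u - R) * y))]
  have hhint : ∀ u : ℝ, R ≤ u → Integrable (h u) μ := by
    intro u hu
    refine Integrable.mono' (hbase.const_mul (2 * R)) (hhcont u).aestronglyMeasurable ?_
    filter_upwards [hae] with y hy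
    rw [Real.norm_eq_abs, abs_of_nonneg (hhnonneg u y hy)]
    exact hhbound u hu y hy
  set G : ℝ → ℝ := fun u => ∫ y, h u y ∂μ with hGdef
  have hGnonneg : ∀ u : ℝ, 0 ≤ G u := by
    intro u
    refine integral_nonneg_of_ae ?_
    filter_upwards [hae] with y hy
    simpa using hhnonneg u y hy
  have hG0 : Tendsto G atTop (nhds 0) := by
    have := tendsto_integral_filter_of_dominated_convergence (μ := μ) (l := atTop)
      (F := h) (f := fun _ => 0) (fun y => 2 * R * min |y| 1)
      (Eventually.of_forall fun u => (hhcont u).aestronglyMeasurable)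
      ?_ (hbase.const_mul (2 * R)) ?_
    · simpa using this
    · filter_upwards [eventually_ge_atTop R] with u hu
      filter_upwards [hae] with y hy
      rw [Real.norm_eq_abs, abs_of_nonneg (hhnonneg u y hy)]
      exact hhbound u hu y hy
    · filter_upwards [hae] with y hy
      have h1 : Tendsto (fun u : ℝ => (u - R) * y) atTop atTop := by
        have := (tendsto_atTop_add_const_right atTop (-R) tendsto_id).atTop_mul_const hy
        simpa [sub_eq_add_neg] using this
      have h2 : Tendsto (fun u : ℝ => Real.exp (-((u - R) * y))) atTop (nhds 0) :=
        Real.tendsto_exp_atBot.comp (tendsto_neg_atTop_atBot.comp h1)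
      have h3 : Tendsto (fun u : ℝ => h u y) atTop (nhds (2 * 0 * min (R * y) 1)) :=
        (tendsto_const_nhds.mul h2).mul tendsto_const_nhds
      simpa using h3
  -- key difference estimate
  have hdiff : ∀ u : ℝ, R + 1 ≤ u → ∀ z ∈ K, ‖Φ (u + z) - Φ u‖ ≤ d * R + G u := by
    intro u hu z hz
    have hupos : (0 : ℝ) < u := by linarith
    have hzre : -R ≤ z.re := by
      have h1 : |z.re| ≤ ‖z‖ := by
        exact Complex.abs_re_le_norm z
      have := hzR z hz
      have := abs_le.1 h1
      linarith [this.1]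
    have hre : 0 < ((u : ℂ) + z).re := by
      simp only [Complex.add_re, Complex.ofReal_re]
      linarith
    have hint1 := brt_int_complex μ hμ0 hμint ((u : ℂ) + z) hre
    have hint2 := brt_int_complex μ hμ0 hμint (u : ℂ) (by simpa using hupos)
    have hsub : (∫ y, (1 - Complex.exp (-(((u : ℂ) + z) * y))) ∂μ)
        - (∫ y, (1 - Complex.exp (-((u : ℂ) * y))) ∂μ)
        = ∫ y, (Complex.exp (-((u : ℂ) * y)) - Complex.exp (-(((u : ℂ) + z) * y))) ∂μ := by
      rw [← integral_sub hint1 hint2]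
      congr 1
      funext y
      ring
    have heq : Φ (u + z) - Φ u = (d : ℂ) * z
        + ∫ y, (Complex.exp (-((u : ℂ) * y)) - Complex.exp (-(((u : ℂ) + z) * y))) ∂μ := by
      rw [hrep _ hre, hrep _ (by simpa using hupos), ← hsub]
      ring
    rw [heq]
    have hnormint : ‖∫ y, (Complex.exp (-((u : ℂ) * y)) - Complex.exp (-(((u : ℂ) + z) * y))) ∂μ‖
        ≤ G u := by
      refine norm_integral_le_of_norm_le (hhint u (by linarith)) ?_
      filter_upwards [hae] with y hy
      have hfac : Complex.exp (-((u : ℂ) * y)) - Complex.exp (-(((u : ℂ) + z) * y))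
          = Complex.exp (-((u : ℂ) * y)) * (1 - Complex.exp (-(z * y))) := by
        rw [show -(((u : ℂ) + z) * y) = -((u : ℂ) * y) + -(z * y) by ring, Complex.exp_add]
        ring
      rw [hfac, norm_mul]
      have hn1 : ‖Complex.exp (-((u : ℂ) * y))‖ = Real.exp (-(u * y)) := by
        rw [Complex.norm_exp]
        norm_num
      rw [hn1]
      have hb := brt_key_bound z y hy.le
      have hmax : max (-(z.re * y)) 0 ≤ R * y := by
        refine max_le ?_ (by positivity)
        nlinarith
      have hmin : min (‖z‖ * y) 1 ≤ min (R * y) 1 := by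
        refine min_le_min ?_ le_rfl
        nlinarith [hzR z hz]
      have hminn : 0 ≤ min (‖z‖ * y) 1 := le_min (by positivity) one_pos.le
      calc Real.exp (-(u * y)) * ‖1 - Complex.exp (-(z * y))‖
          ≤ Real.exp (-(u * y)) * (2 * Real.exp (max (-(z.re * y)) 0) * min (‖z‖ * y) 1) := by
            exact mul_le_mul_of_nonneg_left hb (Real.exp_pos _).le
        _ ≤ Real.exp (-(u * y)) * (2 * Real.exp (R * y) * min (R * y) 1) := by
            gcongr
        _ = h u y := by
            have hexpmul : Real.exp (-(u * y)) * Real.exp (R * y) = Real.exp (-((u - R) * y)) := by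
              rw [← Real.exp_add]; congr 1; ring
            simp only [hhdef]
            rw [← hexpmul]
            ring
    calc ‖(d : ℂ) * z + ∫ y, (Complex.exp (-((u : ℂ) * y))
          - Complex.exp (-(((u : ℂ) + z) * y))) ∂μ‖
        ≤ ‖(d : ℂ) * z‖ + ‖∫ y, (Complex.exp (-((u : ℂ) * y))
          - Complex.exp (-(((u : ℂ) + z) * y))) ∂μ‖ := norm_add_le _ _
      _ ≤ d * R + G u := by
          have : ‖(d : ℂ) * z‖ = d * ‖z‖ := by
            rw [norm_mul, Complex.norm_real, Real.norm_eq_abs, abs_of_nonneg hd]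
          rw [this]
          have := hzR z hz
          have : d * ‖z‖ ≤ d * R := by nlinarith [hzR z hz, norm_nonneg z]
          linarith [hnormint]
  -- conclude
  rw [Metric.tendstoUniformlyOn_iff]
  intro ε hε
  have hεc2 : (0 : ℝ) < ε * c / 2 := by positivity
  filter_upwards [eventually_ge_atTop u0, eventually_ge_atTop (R + 1),
    eventually_ge_atTop (2 * R / ε), hG0.eventually (eventually_lt_nhds hεc2)] with u hu1 hu2 hu3 hGu
  intro z hz
  have hupos : (0 : ℝ) < u := by linarith
  have hφu : c ≤ φR u := hmono u0 u hu0pos hu1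
  have hφupos : 0 < φR u := lt_of_lt_of_le hc hφu
  have hΦu : Φ u = ((φR u : ℝ) : ℂ) := hΦeq u hupos
  have hΦune : Φ u ≠ 0 := by
    rw [hΦu]
    exact_mod_cast ne_of_gt hφupos
  have hdist : dist (1 : ℂ) (Φ (u + z) / Φ u) = ‖Φ (u + z) - Φ u‖ / φR u := by
    rw [dist_eq_norm, one_sub_div hΦune, norm_div, norm_sub_rev, hΦu, Complex.norm_real,
      Real.norm_eq_abs, abs_of_pos hφupos]
  rw [hdist]
  have hbd := hdiff u hu2 z hz
  have hstep : ‖Φ (u + z) - Φ u‖ / φR u ≤ (d * R + G u) / φR u :=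
    div_le_div_of_nonneg_right hbd hφupos.le
  have hsplit : (d * R + G u) / φR u = d * R / φR u + G u / φR u := by
    rw [add_div]
  have hterm2 : G u / φR u < ε / 2 := by
    have h1 : G u / φR u ≤ G u / c := div_le_div_of_nonneg_left (hGnonneg u) hc hφu
    have h2 : G u / c < ε / 2 := by
      rw [div_lt_iff₀ hc]
      linarith
    linarith
  have hterm1 : d * R / φR u ≤ ε / 2 := by
    rcases hd.eq_or_lt with hd0 | hdpos
    · rw [← hd0]
      simp
      positivity
    · have hdu : 0 < d * u := by positivity
      have h1 : d * R / φR u ≤ d * R / (d * u) :=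
        div_le_div_of_nonneg_left (by positivity) hdu (hge_du u hupos)
      have h2 : d * R / (d * u) = R / u := mul_div_mul_left _ _ (ne_of_gt hdpos)
      have hu3' : 2 * R ≤ u * ε := by
        rw [div_le_iff₀ hε] at hu3; exact hu3
      have h3 : R / u ≤ ε / 2 := by
        rw [div_le_div_iff₀ hupos (by norm_num : (0:ℝ) < 2)]
        nlinarith
      linarith [h1, h3]
  calc ‖Φ (u + z) - Φ u‖ / φR u ≤ (d * R + G u) / φR u := hstep
    _ = d * R / φR u + G u / φR u := hsplit
    _ < ε := by linarith
end

section
/- A Bernstein function preserves angular sectors: for every Bernstein function φ and every complex w with Re(w) > 0, one has |arg(φ(w))| ≤ |arg(w)|, where arg takes values in (−π, π]. -/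
open MeasureTheory

private lemma real_key (u v : ℝ) (hu : 0 ≤ u) :
    u * Real.exp (-u) * |Real.sin v| ≤ |v| * (1 - Real.exp (-u) * Real.cos v) := by
  have h1 : |Real.sin v| ≤ |v| := Real.abs_sin_le_abs
  have h2 : Real.cos v ≤ 1 := Real.cos_le_one v
  have h3 : (1 + u) * Real.exp (-u) ≤ 1 := by
    have := Real.add_one_le_exp u
    have he : 0 < Real.exp (-u) := Real.exp_pos _
    have : (1 + u) * Real.exp (-u) ≤ Real.exp u * Real.exp (-u) := by
      apply mul_le_mul_of_nonneg_right (by linarith) he.le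
    rwa [← Real.exp_add, add_neg_cancel, Real.exp_zero] at this
  have he : 0 < Real.exp (-u) := Real.exp_pos _
  have hv : 0 ≤ |v| := abs_nonneg v
  nlinarith [mul_le_mul_of_nonneg_left h2 (mul_nonneg hv he.le),
    mul_le_mul_of_nonneg_left h1 (mul_nonneg hu he.le)]

private lemma re_key (u v : ℝ) (hu : 0 ≤ u) : 0 ≤ 1 - Real.exp (-u) * Real.cos v := by
  have h2 : Real.cos v ≤ 1 := Real.cos_le_one v
  have h2' : -1 ≤ Real.cos v := Real.neg_one_le_cos v
  have he : 0 < Real.exp (-u) := Real.exp_pos _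
  have he1 : Real.exp (-u) ≤ 1 := Real.exp_le_one_iff.2 (by linarith)
  nlinarith

private lemma im_part (w : ℂ) (y : ℝ) (hw : 0 < w.re) (hy : 0 ≤ y) :
    w.re * |(1 - Complex.exp (-(w * (y : ℂ)))).im| ≤
      |w.im| * (1 - Complex.exp (-(w * (y : ℂ)))).re := by
  have hre : (-(w * (y : ℂ))).re = -(w.re * y) := by simp
  have him : (-(w * (y : ℂ))).im = -(w.im * y) := by simp
  have hR : (1 - Complex.exp (-(w * (y : ℂ)))).re
      = 1 - Real.exp (-(w.re * y)) * Real.cos (w.im * y) := by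
    rw [Complex.sub_re, Complex.one_re, Complex.exp_re, hre, him, Real.cos_neg]
  have hI : (1 - Complex.exp (-(w * (y : ℂ)))).im
      = Real.exp (-(w.re * y)) * Real.sin (w.im * y) := by
    rw [Complex.sub_im, Complex.one_im, Complex.exp_im, hre, him, Real.sin_neg]
    ring
  rw [hR, hI]
  rcases hy.eq_or_lt with rfl | hy'
  · simp
  · have key := real_key (w.re * y) (w.im * y) (by positivity)
    have habs : |w.im * y| = |w.im| * y := by
      rw [abs_mul, abs_of_nonneg hy]
    rw [habs] at key
    have he : 0 ≤ Real.exp (-(w.re * y)) := (Real.exp_pos _).le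
    have hs : 0 ≤ |Real.sin (w.im * y)| := abs_nonneg _
    have : w.re * (Real.exp (-(w.re * y)) * |Real.sin (w.im * y)|) * y ≤
        |w.im| * (1 - Real.exp (-(w.re * y)) * Real.cos (w.im * y)) * y := by
      nlinarith
    have key2 : w.re * (Real.exp (-(w.re * y)) * |Real.sin (w.im * y)|) ≤
        |w.im| * (1 - Real.exp (-(w.re * y)) * Real.cos (w.im * y)) :=
      le_of_mul_le_mul_right (by linarith [this]) hy'
    calc w.re * |(Real.exp (-(w.re * y)) * Real.sin (w.im * y))|
        = w.re * (Real.exp (-(w.re * y)) * |Real.sin (w.im * y)|) := by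
          rw [abs_mul, abs_of_nonneg he]
      _ ≤ |w.im| * (1 - Real.exp (-(w.re * y)) * Real.cos (w.im * y)) := key2

private lemma re_part (w : ℂ) (y : ℝ) (hw : 0 < w.re) (hy : 0 ≤ y) :
    0 ≤ (1 - Complex.exp (-(w * (y : ℂ)))).re := by
  have hre : (-(w * (y : ℂ))).re = -(w.re * y) := by simp
  have him : (-(w * (y : ℂ))).im = -(w.im * y) := by simp
  have hR : (1 - Complex.exp (-(w * (y : ℂ)))).re
      = 1 - Real.exp (-(w.re * y)) * Real.cos (w.im * y) := by
    rw [Complex.sub_re, Complex.one_re, Complex.exp_re, hre, him, Real.cos_neg]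
  rw [hR]
  exact re_key _ _ (by positivity)

private lemma arg_eq_arctan {z : ℂ} (hz : 0 < z.re) :
    Complex.arg z = Real.arctan (z.im / z.re) := by
  have h : |Complex.arg z| < Real.pi / 2 := Complex.abs_arg_lt_pi_div_two_iff.2 (Or.inl hz)
  rw [abs_lt] at h
  rw [← Complex.tan_arg, Real.arctan_tan h.1 h.2]

private lemma abs_arctan (t : ℝ) : |Real.arctan t| = Real.arctan |t| := by
  rcases le_or_gt 0 t with ht | ht
  · rw [abs_of_nonneg ht, abs_of_nonneg]
    rw [← Real.arctan_zero]
    exact Real.arctan_strictMono.monotone ht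
  · have h1 : Real.arctan t < 0 := by
      rw [← Real.arctan_zero]
      exact Real.arctan_strictMono ht
    rw [abs_of_neg ht, abs_of_neg h1, Real.arctan_neg]

private lemma sector_lemma (w z : ℂ) (hw : 0 < w.re) (hzre : 0 ≤ z.re)
    (h : w.re * |z.im| ≤ |w.im| * z.re) : |Complex.arg z| ≤ |Complex.arg w| := by
  have habsw : |Complex.arg w| = Real.arctan (|w.im| / w.re) := by
    rw [arg_eq_arctan hw, abs_arctan, abs_div, abs_of_pos hw]
  rcases eq_or_ne z 0 with rfl | hz
  · simp only [Complex.arg_zero, abs_zero]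
    rw [habsw, ← Real.arctan_zero]
    exact Real.arctan_strictMono.monotone (by positivity)
  · have hzre' : 0 < z.re := by
      rcases hzre.eq_or_lt with he | h'
      · exfalso
        have h1 : w.re * |z.im| ≤ 0 := by rw [← he] at h; simpa using h
        have : |z.im| ≤ 0 := by nlinarith [abs_nonneg z.im]
        have hzim : z.im = 0 := abs_eq_zero.1 (le_antisymm this (abs_nonneg _))
        exact hz (Complex.ext he.symm hzim)
      · exact h'
    have habsz : |Complex.arg z| = Real.arctan (|z.im| / z.re) := by
      rw [arg_eq_arctan hzre', abs_arctan, abs_div, abs_of_pos hzre']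
    rw [habsz, habsw]
    apply Real.arctan_strictMono.monotone
    rw [div_le_div_iff₀ hzre' hw]
    nlinarith [h]

/-- A Bernstein function preserves angular sectors: `|arg(Φ(w))| ≤ |arg(w)|` for `Re(w) > 0`. -/
theorem bernstein_preserves_sectors (Φ : ℂ → ℂ) (φ0 d : ℝ) (hφ0 : 0 ≤ φ0) (hd : 0 ≤ d)
    (μ : Measure ℝ) (hμ0 : μ (Set.Iic 0) = 0)
    (hμint : ∫⁻ y, ENNReal.ofReal (min y 1) ∂μ ≠ ⊤)
    (hrep : ∀ w : ℂ, 0 < w.re →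
      Φ w = (φ0 : ℂ) + (d : ℂ) * w + ∫ y, (1 - Complex.exp (-(w * (y : ℂ)))) ∂μ)
    (hne : ¬(φ0 = 0 ∧ d = 0 ∧ μ = 0)) :
    ∀ w : ℂ, 0 < w.re → |Complex.arg (Φ w)| ≤ |Complex.arg w| := by
  intro w hw
  set f : ℝ → ℂ := fun y => 1 - Complex.exp (-(w * (y : ℂ))) with hf
  have hae : ∀ᵐ y ∂μ, 0 ≤ y := by
    refine (ae_iff.2 ?_)
    rw [show {y : ℝ | ¬ 0 ≤ y} = Set.Iio 0 from by ext y; simp]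
    exact measure_mono_null Set.Iio_subset_Iic_self hμ0
  set I : ℂ := ∫ y, f y ∂μ with hI
  -- sector bounds for the integral term
  have hIre : 0 ≤ I.re ∧ w.re * |I.im| ≤ |w.im| * I.re := by
    by_cases hint : Integrable f μ
    · have hre : I.re = ∫ y, (f y).re ∂μ := (integral_re hint).symm
      have him : I.im = ∫ y, (f y).im ∂μ := (integral_im hint).symm
      have h1 : 0 ≤ ∫ y, (f y).re ∂μ :=
        integral_nonneg_of_ae (hae.mono fun y hy => re_part w y hw hy)
      refine ⟨hre ▸ h1, ?_⟩
      have h2 : |∫ y, (f y).im ∂μ| ≤ ∫ y, |(f y).im| ∂μ := by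
        simpa using norm_integral_le_integral_norm (μ := μ) (f := fun y => (f y).im)
      have h3 : ∫ y, w.re * |(f y).im| ∂μ ≤ ∫ y, |w.im| * (f y).re ∂μ := by
        refine integral_mono_ae ((hint.im.abs).const_mul _) (hint.re.const_mul _) ?_
        exact hae.mono fun y hy => im_part w y hw hy
      rw [integral_const_mul, integral_const_mul] at h3
      rw [hre, him]
      calc w.re * |∫ y, (f y).im ∂μ| ≤ w.re * ∫ y, |(f y).im| ∂μ :=
            mul_le_mul_of_nonneg_left h2 hw.le
        _ ≤ |w.im| * ∫ y, (f y).re ∂μ := h3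
    · rw [hI, integral_undef hint]
      simp
  have hΦ := hrep w hw
  have hre : (Φ w).re = φ0 + d * w.re + I.re := by
    rw [hΦ]; simp [← hI]; rfl
  have him : (Φ w).im = d * w.im + I.im := by
    rw [hΦ]; simp [← hI]; rfl
  apply sector_lemma w _ hw
  · rw [hre]
    have := hIre.1
    positivity
  · rw [hre, him]
    have h4 := hIre.2
    have h5 : |d * w.im + I.im| ≤ d * |w.im| + |I.im| := by
      calc |d * w.im + I.im| ≤ |d * w.im| + |I.im| := abs_add_le _ _
        _ = d * |w.im| + |I.im| := by rw [abs_mul, abs_of_nonneg hd]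
    have hwim : 0 ≤ |w.im| := abs_nonneg _
    nlinarith [hIre.1]
end

section
/- For a Bernstein function φ and all u > 0, the second derivative satisfies |φ''(u)| ≤ 4 φ(u)/u², and hence |φ''(u)|/φ(u) ≤ 4/u². -/
open MeasureTheory

lemma bernstein_key_ineq (t : ℝ) (ht : 0 ≤ t) :
    t ^ 2 * Real.exp (-t) ≤ 4 * (1 - Real.exp (-t)) := by
  have h1 : 1 + t / 2 ≤ Real.exp (t / 2) := by linarith [Real.add_one_le_exp (t / 2)]
  have h2 : Real.exp (t / 2) ^ 2 = Real.exp t := by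
    rw [sq, ← Real.exp_add]; ring_nf
  have h3 : Real.exp t * Real.exp (-t) = 1 := by
    rw [← Real.exp_add]; simp
  have h4 : 0 < Real.exp (-t) := Real.exp_pos _
  nlinarith [mul_le_mul h1 h1 (by linarith) (Real.exp_pos (t/2)).le,
    mul_pos h4 h4, sq_nonneg t, mul_nonneg (mul_nonneg ht ht) h4.le,
    mul_nonneg ht h4.le]

/-- For a Bernstein function `φ`, with `φ''(u) = -∫ y² e^{-uy} Π(dy)` and `φ(u) > 0`
for `u > 0`, one has `|φ''(u)| ≤ 4 φ(u)/u²`, hence `|φ''(u)|/φ(u) ≤ 4/u²`. -/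
theorem bernstein_second_deriv_bound (φ φ'' : ℝ → ℝ) (φ0 d : ℝ) (hφ0 : 0 ≤ φ0) (hd : 0 ≤ d)
    (μ : Measure ℝ) (hμ0 : μ (Set.Iic 0) = 0)
    (hμint : ∫⁻ y, ENNReal.ofReal (min y 1) ∂μ ≠ ⊤)
    (hrep : ∀ u : ℝ, 0 ≤ u → φ u = φ0 + d * u + ∫ y, (1 - Real.exp (-u * y)) ∂μ)
    (hderiv2 : ∀ u : ℝ, 0 < u → φ'' u = -∫ y, y ^ 2 * Real.exp (-u * y) ∂μ)
    (hpos : ∀ u : ℝ, 0 < u → 0 < φ u) :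
    ∀ u : ℝ, 0 < u → |φ'' u| ≤ 4 * φ u / u ^ 2 ∧ |φ'' u| / φ u ≤ 4 / u ^ 2 := by
  intro u hu
  have hφu := hpos u hu
  have hu2 : (0:ℝ) < u ^ 2 := by positivity
  -- a.e. y ≥ 0
  have hae : ∀ᵐ y ∂μ, 0 ≤ y := by
    rw [ae_iff]
    refine measure_mono_null (fun y hy => ?_) hμ0
    simp only [Set.mem_setOf_eq, not_le] at hy
    exact hy.le
  -- integrability of min y 1
  have hmin : Integrable (fun y => min y 1) μ := by
    refine ⟨(continuous_id.min continuous_const).aestronglyMeasurable, ?_⟩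
    rw [hasFiniteIntegral_iff_ofReal (hae.mono fun y hy => le_min hy one_pos.le)]
    exact lt_top_iff_ne_top.mpr hμint
  -- pointwise bounds for y ≥ 0
  have hgnn : ∀ y : ℝ, 0 ≤ y → 0 ≤ 1 - Real.exp (-u * y) := by
    intro y hy
    have : Real.exp (-u * y) ≤ 1 := Real.exp_le_one_iff.mpr (by nlinarith)
    linarith
  have hgbd : ∀ y : ℝ, 0 ≤ y → 1 - Real.exp (-u * y) ≤ max u 1 * min y 1 := by
    intro y hy
    have h1 : 1 - Real.exp (-u * y) ≤ u * y := by
      have := Real.add_one_le_exp (-u * y); linarith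
    have h2 : 1 - Real.exp (-u * y) ≤ 1 := by
      have := (Real.exp_pos (-u * y)).le; linarith
    rcases le_total y 1 with h | h
    · rw [min_eq_left h]
      calc 1 - Real.exp (-u * y) ≤ u * y := h1
        _ ≤ max u 1 * y := by
            exact mul_le_mul_of_nonneg_right (le_max_left _ _) hy
    · rw [min_eq_right h]
      calc 1 - Real.exp (-u * y) ≤ 1 := h2
        _ ≤ max u 1 * 1 := by simp [le_max_right]
  -- integrability of g
  have hg : Integrable (fun y => 1 - Real.exp (-u * y)) μ := by
    refine Integrable.mono' (hmin.const_mul (max u 1)) ?_ ?_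
    · exact (continuous_const.sub ((continuous_const.mul continuous_id).rexp)).aestronglyMeasurable
    · filter_upwards [hae] with y hy
      rw [Real.norm_eq_abs, abs_of_nonneg (hgnn y hy)]
      exact hgbd y hy
  -- key pointwise bound
  have hkey : ∀ y : ℝ, 0 ≤ y →
      y ^ 2 * Real.exp (-u * y) ≤ 4 / u ^ 2 * (1 - Real.exp (-u * y)) := by
    intro y hy
    have h := bernstein_key_ineq (u * y) (by positivity)
    have hrw : -(u * y) = -u * y := by ring
    rw [hrw] at h
    rw [div_mul_eq_mul_div, le_div_iff₀ hu2]
    nlinarith [h]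
  -- integrability of f
  have hf : Integrable (fun y => y ^ 2 * Real.exp (-u * y)) μ := by
    refine Integrable.mono' (hg.const_mul (4 / u ^ 2)) ?_ ?_
    · exact ((continuous_pow 2).mul ((continuous_const.mul continuous_id).rexp)).aestronglyMeasurable
    · filter_upwards [hae] with y hy
      rw [Real.norm_eq_abs, abs_of_nonneg (by positivity)]
      exact hkey y hy
  -- compare integrals
  have hIle : ∫ y, y ^ 2 * Real.exp (-u * y) ∂μ
      ≤ 4 / u ^ 2 * ∫ y, (1 - Real.exp (-u * y)) ∂μ := by
    rw [← integral_const_mul]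
    refine integral_mono_ae hf (hg.const_mul _) ?_
    filter_upwards [hae] with y hy using hkey y hy
  have hIg : ∫ y, (1 - Real.exp (-u * y)) ∂μ ≤ φ u := by
    have := hrep u hu.le
    nlinarith
  have hIf_nonneg : 0 ≤ ∫ y, y ^ 2 * Real.exp (-u * y) ∂μ :=
    integral_nonneg fun y => by positivity
  have habs : |φ'' u| = ∫ y, y ^ 2 * Real.exp (-u * y) ∂μ := by
    rw [hderiv2 u hu, abs_neg, abs_of_nonneg hIf_nonneg]
  have hmain : |φ'' u| ≤ 4 * φ u / u ^ 2 := by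
    rw [habs]
    calc ∫ y, y ^ 2 * Real.exp (-u * y) ∂μ
        ≤ 4 / u ^ 2 * ∫ y, (1 - Real.exp (-u * y)) ∂μ := hIle
      _ ≤ 4 / u ^ 2 * φ u := by
          refine mul_le_mul_of_nonneg_left hIg (by positivity)
      _ = 4 * φ u / u ^ 2 := by ring
  refine ⟨hmain, ?_⟩
  rw [div_le_div_iff₀ hφu hu2]
  exact (le_div_iff₀ hu2).mp hmain
end
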